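/- Let s be a binary string of length l, s^{(1)} its expansion, and let x_1 < ... < x_k be a monochromatic D-diffsequence in {1,...,4l} of color c ∈ {0,1} under s^{(1)}. Suppose there exists d ∈ {0,1} such that s_{pos(x_i)} = d for all 1 ≤ i ≤ k. Then the set {pos(x_i) : 1 ≤ i ≤ k} has at least k - 1 distinct elements. -/
import Mathlib


/-- The set of powers of two. -/
def D : Set ℕ := {d | ∃ i : ℕ, d = 2 ^ i}

/-- `pos i = ⌈i / 4⌉`. -/
def pos (i : ℕ) : ℕ := (i + 3) / 4

/-- The expansion of a binary string: each `0` becomes `0011`, each `1` becomes `1100`.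
For `1 ≤ m`, `s⁽¹⁾_m = s_{⌈m/4⌉}` if `m % 4 ∈ {1,2}` and `1 - s_{⌈m/4⌉}` otherwise. -/
def expand (s : ℕ → Fin 2) : ℕ → Fin 2 :=
  fun m => if m % 4 = 1 ∨ m % 4 = 2 then s (pos m) else 1 - s (pos m)

/-- `a 0 < a 1 < ⋯ < a (k-1)` is a `D`-diffsequence contained in `{1, …, n}`. -/
def IsDiffseqIn (n k : ℕ) (a : ℕ → ℕ) : Prop :=
  (∀ i < k, 1 ≤ a i ∧ a i ≤ n) ∧
    ∀ i, i + 1 < k → a i < a (i + 1) ∧ a (i + 1) - a i ∈ D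

/-- The set of hops of a length-`k` diffsequence `a` with respect to the string `s`:
indices `j` (0-based) with `a (j+1) - a j = 1` and `s (a (j+1)) ≠ s (a j)`. -/
def hops (s : ℕ → Fin 2) (k : ℕ) (a : ℕ → ℕ) : Finset ℕ :=
  (Finset.range (k - 1)).filter fun j => a (j + 1) = a j + 1 ∧ s (a (j + 1)) ≠ s (a j)

/-- `psi s n h` : the maximum length of a `D`-diffsequence contained in `{1, …, n}`
with at most `h` hops with respect to `s` (0 if there is none). -/
noncomputable def psi (s : ℕ → Fin 2) (n h : ℕ) : ℕ :=
  sSup {k | ∃ a : ℕ → ℕ, IsDiffseqIn n k a ∧ (hops s k a).card ≤ h}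

lemma D_cases {n : ℕ} (h : n ∈ D) : n = 1 ∨ n = 2 ∨ (4 ≤ n ∧ n % 4 = 0) := by
  obtain ⟨i, rfl⟩ := h
  match i with
  | 0 => left; rfl
  | 1 => right; left; rfl
  | (i+2) =>
    right; right
    have h4 : 2 ^ (i+2) = 4 * 2 ^ i := by ring
    have h1 : 1 ≤ 2 ^ i := Nat.one_le_two_pow
    omega

lemma pos_mono {a b : ℕ} (h : a ≤ b) : pos a ≤ pos b :=
  Nat.div_le_div_right (by omega)

lemma main_lemma (k t : ℕ) (x : ℕ → ℕ) (ht : t = 1 ∨ t = 3)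
    (hstep : ∀ i, i + 1 < k → x i < x (i+1) ∧ x (i+1) - x i ∈ D)
    (hres : ∀ i < k, x i % 4 = t ∨ x i % 4 = (t+1) % 4) :
    k - 1 ≤ ((Finset.range k).image fun i => pos (x i)).card := by
  have tri : ∀ j, j + 1 < k → pos (x j) < pos (x (j+1)) ∨
      (pos (x j) = pos (x (j+1)) ∧ x j % 4 = t ∧ x (j+1) % 4 = (t+1) % 4) := by
    intro j hj
    obtain ⟨hlt, hD⟩ := hstep j hj
    have h1 := hres j (by omega)
    have h2 := hres (j+1) hj
    have hc := D_cases hD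
    unfold pos
    rcases ht with rfl | rfl <;> omega
  have after : ∀ j, j + 1 < k → x j % 4 = (t+1) % 4 →
      x (j+1) % 4 = (t+1) % 4 ∧ pos (x j) < pos (x (j+1)) := by
    intro j hj hr
    obtain ⟨hlt, hD⟩ := hstep j hj
    have h2 := hres (j+1) hj
    have hc := D_cases hD
    unfold pos
    rcases ht with rfl | rfl <;> omega
  have mono : ∀ i i', i ≤ i' → i' < k → pos (x i) ≤ pos (x i') := by
    intro i i' hle hlt
    obtain ⟨m, rfl⟩ := Nat.exists_eq_add_of_le hle
    clear hle
    induction m with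
    | zero => simp
    | succ n ih =>
      have h1 := ih (by omega)
      obtain ⟨hl, _⟩ := hstep (i+n) (by omega)
      have h2 : pos (x (i+n)) ≤ pos (x (i+n+1)) := pos_mono (by omega)
      have : i + (n+1) = i + n + 1 := by omega
      rw [this]
      omega
  have uniq : ∀ j j', j + 1 < k → j' + 1 < k → pos (x j) = pos (x (j+1)) →
      pos (x j') = pos (x (j'+1)) → j = j' := by
    have key : ∀ j j', j + 1 < k → j' + 1 < k → pos (x j) = pos (x (j+1)) →
        pos (x j') = pos (x (j'+1)) → j < j' → False := by
      intro j j' hj hj' he he' hlt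
      have shape : x (j+1) % 4 = (t+1) % 4 := by
        rcases tri j hj with h | ⟨_, _, h⟩
        · omega
        · exact h
      have prop : ∀ m, j + 1 + m < k → x (j+1+m) % 4 = (t+1) % 4 := by
        intro m
        induction m with
        | zero => intro _; exact shape
        | succ n ih =>
          intro h
          have h1 := after (j+1+n) (by omega) (ih (by omega))
          have : j + 1 + (n+1) = (j+1+n) + 1 := by omega
          rw [this]
          exact h1.1
      have hres' : x j' % 4 = (t+1) % 4 := by
        have : j' = j + 1 + (j' - j - 1) := by omega
        rw [this]; exact prop _ (by omega)
      have hshape' : x j' % 4 = t := by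
        rcases tri j' hj' with h | ⟨_, h, _⟩
        · omega
        · exact h
      rcases ht with rfl | rfl <;> omega
    intro j j' hj hj' he he'
    rcases lt_trichotomy j j' with h | h | h
    · exact absurd (key j j' hj hj' he he' h) (by simp)
    · exact h
    · exact absurd (key j' j hj' hj he' he h) (by simp)
  by_cases hrep : ∃ j, j + 1 < k ∧ pos (x j) = pos (x (j+1))
  · obtain ⟨j₀, hj₀, heq₀⟩ := hrep
    have strict : ∀ i, i + 1 < k → i ≠ j₀ → pos (x i) < pos (x (i+1)) := by
      intro i hi hne
      rcases tri i hi with h | ⟨h, _⟩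
      · exact h
      · exact absurd (uniq i j₀ hi hj₀ h heq₀) hne
    have slt : ∀ a b, a < b → b < k → b ≠ j₀ + 1 → pos (x a) < pos (x b) := by
      intro a b hab hbk hbne
      by_cases ha : a = j₀
      · have hb2 : a + 2 ≤ b := by omega
        have s1 : pos (x a) ≤ pos (x (a+1)) := mono a (a+1) (by omega) (by omega)
        have s2 : pos (x (a+1)) < pos (x (a+2)) :=
          strict (a+1) (by omega) (by omega)
        have s3 : pos (x (a+2)) ≤ pos (x b) := mono (a+2) b hb2 hbk
        omega
      · have s1 : pos (x a) < pos (x (a+1)) := strict a (by omega) ha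
        have s2 : pos (x (a+1)) ≤ pos (x b) := mono (a+1) b (by omega) hbk
        omega
    set S : Finset ℕ := (Finset.range k).erase (j₀+1) with hS
    have hinj : Set.InjOn (fun i => pos (x i)) S := by
      intro a ha b hb hab
      simp only [hS, Finset.coe_erase, Finset.coe_range, Set.mem_diff,
        Set.mem_Iio, Set.mem_singleton_iff] at ha hb
      rcases lt_trichotomy a b with h | h | h
      · exact absurd hab (Nat.ne_of_lt (slt a b h hb.1 hb.2))
      · exact h
      · exact absurd hab.symm (Nat.ne_of_lt (slt b a h ha.1 ha.2))
    have hsub : S.image (fun i => pos (x i)) ⊆ (Finset.range k).image (fun i => pos (x i)) :=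
      Finset.image_subset_image (Finset.erase_subset _ _)
    have hcard : (S.image (fun i => pos (x i))).card = k - 1 := by
      rw [Finset.card_image_of_injOn hinj, hS,
        Finset.card_erase_of_mem (Finset.mem_range.mpr (by omega)), Finset.card_range]
    have := Finset.card_le_card hsub
    omega
  · push_neg at hrep
    have strict : ∀ i, i + 1 < k → pos (x i) < pos (x (i+1)) := by
      intro i hi
      rcases tri i hi with h | ⟨h, _⟩
      · exact h
      · exact absurd h (hrep i hi)
    have hinj : Set.InjOn (fun i => pos (x i)) (Finset.range k) := by
      intro a ha b hb hab
      simp only [Finset.coe_range, Set.mem_Iio] at ha hb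
      have hab' : pos (x a) = pos (x b) := hab
      rcases lt_trichotomy a b with h | h | h
      · have s1 : pos (x a) < pos (x (a+1)) := strict a (by omega)
        have s2 : pos (x (a+1)) ≤ pos (x b) := mono (a+1) b (by omega) hb
        omega
      · exact h
      · have s1 : pos (x b) < pos (x (b+1)) := strict b (by omega)
        have s2 : pos (x (b+1)) ≤ pos (x a) := mono (b+1) a (by omega) ha
        omega
    rw [Finset.card_image_of_injOn hinj, Finset.card_range]
    omega

theorem stmt_3 (l k : ℕ) (s : ℕ → Fin 2) (x : ℕ → ℕ) (c d : Fin 2)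
    (hdiff : IsDiffseqIn (4 * l) k x)
    (hmono : ∀ i < k, expand s (x i) = c)
    (hd : ∀ i < k, s (pos (x i)) = d) :
    k - 1 ≤ ((Finset.range k).image fun i => pos (x i)).card := by
  obtain ⟨hbounds, hstep⟩ := hdiff
  by_cases hcd : c = d
  · apply main_lemma k 1 x (Or.inl rfl) hstep
    intro i hi
    have hm := hmono i hi
    have hdi := hd i hi
    unfold expand at hm
    by_cases h4 : x i % 4 = 1 ∨ x i % 4 = 2
    · simpa using h4
    · rw [if_neg h4, hdi, hcd] at hm
      exfalso
      revert hm
      fin_cases d <;> decide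
  · apply main_lemma k 3 x (Or.inr rfl) hstep
    intro i hi
    have hm := hmono i hi
    have hdi := hd i hi
    unfold expand at hm
    by_cases h4 : x i % 4 = 1 ∨ x i % 4 = 2
    · rw [if_pos h4, hdi] at hm
      exact absurd hm.symm hcd
    · push_neg at h4
      have := Nat.mod_lt (x i) (y := 4) (by omega)
      omega
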